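/- Let p be a prime, n ≥ 1, and P_n a Sylow p-subgroup of S_{p^n}. Then the maximum of |A| over all abelian subgroups A of P_n equals p^{p^{n−1}}. Consequently, the p-rank of P_n is p^{n−1}. -/
import Mathlib

open Equiv MulAction Pointwise

private lemma pmul_le_pow' {p : ℕ} (hp : 2 ≤ p) : ∀ k, p * k ≤ p ^ k := by
  intro k
  induction k with
  | zero => simp
  | succ k ih =>
    rcases Nat.eq_zero_or_pos k with hk | hk
    · subst hk; simp
    · have h1 : p ≤ p ^ k := Nat.le_self_pow hk.ne' p
      calc p * (k+1) = p * k + p := by ring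
        _ ≤ p ^ k + p ^ k := Nat.add_le_add ih h1
        _ = 2 * p ^ k := by ring
        _ ≤ p * p ^ k := Nat.mul_le_mul_right _ hp
        _ = p ^ (k+1) := by rw [pow_succ]; ring

/-- Key counting bound: a commutative `p`-subgroup of a permutation group on a
finite type `α` has order `p ^ m` with `p * m ≤ |α|`. -/
private lemma abelian_perm_pgroup_card' {α : Type*} [Fintype α] {p : ℕ} (hp : p.Prime)
    (B : Subgroup (Perm α)) (hB : ∀ a ∈ B, ∀ b ∈ B, a * b = b * a)
    (hpB : IsPGroup p ↥B) : ∃ m, Nat.card ↥B = p ^ m ∧ p * m ≤ Fintype.card α := by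
  classical
  haveI := Fact.mk hp
  obtain ⟨m, hm⟩ := hpB.exists_card_eq
  refine ⟨m, hm, ?_⟩
  set Q := orbitRel.Quotient ↥B α with hQ
  haveI : Fintype Q := Fintype.ofFinite _
  have horb : ∀ ω : Q, ∃ k, Nat.card (orbit ↥B ω.out) = p ^ k := by
    intro ω
    have hdvd : Nat.card (orbit ↥B ω.out) ∣ Nat.card ↥B := by
      rw [Nat.card_congr (orbitEquivQuotientStabilizer ↥B ω.out)]
      exact Subgroup.card_quotient_dvd_card _
    rw [hm] at hdvd
    obtain ⟨k, _, hk⟩ := (Nat.dvd_prime_pow hp).mp hdvd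
    exact ⟨k, hk⟩
  choose k hk using horb
  have hcomm : ∀ a b : ↥B, a * b = b * a := fun a b => Subtype.ext (hB a a.2 b b.2)
  have hinj : Function.Injective
      (fun (b : ↥B) (ω : Q) => (⟨b • ω.out, mem_orbit _ _⟩ : orbit ↥B ω.out)) := by
    intro a b hab
    have key : ∀ x : α, a • x = b • x := by
      intro x
      set ω : Q := ⟦x⟧ with hω
      have : (⟦ω.out⟧ : Q) = ⟦x⟧ := by rw [hω, Quotient.out_eq]
      obtain ⟨c, hc⟩ := Quotient.exact this
      have hc' : c • x = ω.out := hc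
      have hx : x = c⁻¹ • ω.out := by rw [← hc', inv_smul_smul]
      have hout : a • ω.out = b • ω.out := Subtype.ext_iff.mp (congrFun hab ω)
      calc a • x = a • c⁻¹ • ω.out := by rw [hx]
        _ = (a * c⁻¹) • ω.out := (mul_smul _ _ _).symm
        _ = (c⁻¹ * a) • ω.out := by rw [(Commute.inv_right (hcomm a c) : _).eq]
        _ = c⁻¹ • a • ω.out := mul_smul _ _ _
        _ = c⁻¹ • b • ω.out := by rw [hout]
        _ = (c⁻¹ * b) • ω.out := (mul_smul _ _ _).symm
        _ = (b * c⁻¹) • ω.out := by rw [← (Commute.inv_right (hcomm b c)).eq]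
        _ = b • c⁻¹ • ω.out := mul_smul _ _ _
        _ = b • x := by rw [← hx]
    exact Subtype.ext (Equiv.ext key)
  have h1 : Nat.card ↥B ≤ ∏ ω : Q, Nat.card (orbit ↥B ω.out) := by
    have := Nat.card_le_card_of_injective _ hinj
    rwa [Nat.card_pi] at this
  have h2 : ∑ ω : Q, Nat.card (orbit ↥B ω.out) = Fintype.card α := by
    rw [Fintype.card_congr (selfEquivSigmaOrbits ↥B α), Fintype.card_sigma]
    exact Finset.sum_congr rfl fun ω _ => Nat.card_eq_fintype_card
  have h3 : (p:ℕ) ^ m ≤ p ^ (∑ ω : Q, k ω) := by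
    rw [← hm]
    calc Nat.card ↥B ≤ ∏ ω : Q, Nat.card (orbit ↥B ω.out) := h1
      _ = ∏ ω : Q, p ^ (k ω) := Finset.prod_congr rfl fun ω _ => hk ω
      _ = p ^ (∑ ω : Q, k ω) := Finset.prod_pow_eq_pow_sum _ _ _
  have hm_le : m ≤ ∑ ω : Q, k ω := (Nat.pow_le_pow_iff_right hp.one_lt).mp h3
  calc p * m ≤ p * ∑ ω : Q, k ω := Nat.mul_le_mul_left _ hm_le
    _ = ∑ ω : Q, p * k ω := Finset.mul_sum _ _ _
    _ ≤ ∑ ω : Q, p ^ (k ω) := Finset.sum_le_sum fun ω _ => pmul_le_pow' hp.two_le _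
    _ = ∑ ω : Q, Nat.card (orbit ↥B ω.out) := Finset.sum_congr rfl fun ω _ => (hk ω).symm
    _ = Fintype.card α := h2

/-- Conjugation of permutation groups by an equiv, as a monoid hom. -/
private def permCongrHom' {α β : Type*} (e : α ≃ β) : Perm α →* Perm β where
  toFun := e.permCongr
  map_one' := by ext x; simp
  map_mul' f g := by ext x; simp

private lemma permCongrHom'_injective {α β : Type*} (e : α ≃ β) :
    Function.Injective (permCongrHom' e) := e.permCongr.injective

/-- The translation action, as a monoid hom into the permutation group. -/
private def shiftHom' (m p : ℕ) [NeZero p] :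
    (Fin m → Multiplicative (ZMod p)) →* Perm (Fin m × ZMod p) where
  toFun f := Equiv.prodCongrRight fun i => Equiv.addLeft (f i).toAdd
  map_one' := by ext ⟨i, x⟩ <;> simp
  map_mul' f g := by ext ⟨i, x⟩ <;> simp [add_assoc]

private lemma shiftHom'_injective (m p : ℕ) [NeZero p] :
    Function.Injective (shiftHom' m p) := by
  intro f g h
  funext i
  have := congrArg (fun (σ : Perm (Fin m × ZMod p)) => σ (i, 0)) h
  simp [shiftHom'] at this
  exact Multiplicative.toAdd.injective this

section transfer
variable {G H : Type*} [Group G] [Group H]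

private lemma comm_map' (φ : G →* H) {E : Subgroup G}
    (hE : ∀ a ∈ E, ∀ b ∈ E, a * b = b * a) :
    ∀ a ∈ E.map φ, ∀ b ∈ E.map φ, a * b = b * a := by
  rintro _ ⟨a, ha, rfl⟩ _ ⟨b, hb, rfl⟩
  rw [← map_mul, ← map_mul, hE a ha b hb]

private lemma pow_map' (φ : G →* H) {p : ℕ} {E : Subgroup G} (hE : ∀ a ∈ E, a ^ p = 1) :
    ∀ a ∈ E.map φ, a ^ p = 1 := by
  rintro _ ⟨a, ha, rfl⟩
  rw [← map_pow, hE a ha, map_one]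

private lemma card_map' (φ : G →* H) (hφ : Function.Injective φ) (E : Subgroup G) :
    Nat.card (E.map φ) = Nat.card E :=
  (Nat.card_congr (Subgroup.equivMapOfInjective E φ hφ).toEquiv).symm

end transfer

/-- Construction of an elementary abelian subgroup of order `p ^ p ^ (n-1)` inside a
given Sylow `p`-subgroup of `S_{p^n}`. -/
private lemma exists_elem_abelian' (p n : ℕ) (hp : p.Prime) (hn : 1 ≤ n)
    (P : Sylow p (Equiv.Perm (Fin (p ^ n)))) :
    ∃ E : Subgroup (Equiv.Perm (Fin (p ^ n))),
      E ≤ P ∧ (∀ a ∈ E, ∀ b ∈ E, a * b = b * a) ∧ (∀ a ∈ E, a ^ p = 1) ∧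
      Nat.card E = p ^ p ^ (n - 1) := by
  haveI : NeZero p := ⟨hp.pos.ne'⟩
  haveI := Fact.mk hp
  set m := p ^ (n - 1) with hmdef
  have hcard : Fintype.card (Fin m × ZMod p) = Fintype.card (Fin (p ^ n)) := by
    simp [ZMod.card, hmdef, ← pow_succ, Nat.sub_add_cancel hn]
  let e : (Fin m × ZMod p) ≃ Fin (p ^ n) := Fintype.equivOfCardEq hcard
  let ψ : (Fin m → Multiplicative (ZMod p)) →* Perm (Fin (p ^ n)) :=
    (permCongrHom' e).comp (shiftHom' m p)
  have hψ : Function.Injective ψ :=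
    (permCongrHom'_injective e).comp (shiftHom'_injective m p)
  let E₁ : Subgroup (Perm (Fin (p ^ n))) := ψ.range
  have hE₁comm : ∀ a ∈ E₁, ∀ b ∈ E₁, a * b = b * a := by
    rintro _ ⟨f, rfl⟩ _ ⟨g, rfl⟩
    rw [← map_mul, ← map_mul, mul_comm]
  have hE₁pow : ∀ a ∈ E₁, a ^ p = 1 := by
    rintro _ ⟨f, rfl⟩
    rw [← map_pow]
    convert map_one ψ
    funext i
    show (f i) ^ p = 1
    have : (p : ℕ) • (f i).toAdd = 0 := by
      simp [nsmul_eq_mul, ZMod.natCast_self]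
    apply Multiplicative.toAdd.injective
    simpa [toAdd_pow] using this
  have hE₁card : Nat.card E₁ = p ^ m := by
    rw [← Nat.card_congr (MonoidHom.ofInjective hψ).toEquiv]
    simp [Nat.card_eq_fintype_card, ZMod.card]
  have hpE₁ : IsPGroup p E₁ := IsPGroup.of_card hE₁card
  obtain ⟨Q, hQ⟩ := hpE₁.exists_le_sylow
  obtain ⟨g, hg⟩ := MulAction.exists_smul_eq (Perm (Fin (p ^ n))) Q P
  refine ⟨E₁.map (MulAut.conj g).toMonoidHom, ?_, comm_map' _ hE₁comm, pow_map' _ hE₁pow, ?_⟩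
  · rintro x ⟨y, hy, rfl⟩
    have h1 : (MulAut.conj g) • y ∈ MulAut.conj g • (Q : Subgroup _) :=
      Subgroup.smul_mem_pointwise_smul y _ _ (hQ hy)
    have h2 : (MulAut.conj g • (Q : Subgroup (Perm (Fin (p^n))))) =
        ((g • Q : Sylow p _) : Subgroup _) := (Sylow.coe_subgroup_smul).symm
    rw [h2, hg] at h1
    exact h1
  · rw [card_map' _ (MulAut.conj g).injective, hE₁card]

/-- Let `p` be a prime, `n ≥ 1` and `P` a Sylow `p`-subgroup of `S_{p^n}`.  The
maximum of `|A|` over all abelian subgroups `A` of `P` equals `p ^ (p ^ (n-1))`: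
there is an abelian subgroup of that order and every abelian subgroup has order at
most that.  Consequently the `p`-rank of `P` is `p ^ (n-1)`: there is an elementary
abelian subgroup of order `p ^ (p ^ (n-1))`, and every elementary abelian subgroup
has order at most `p ^ (p ^ (n-1))`. -/
theorem max_abelian_subgroup_card_sylow_symmetricGroup
    (p n : ℕ) (hp : p.Prime) (hn : 1 ≤ n)
    (P : Sylow p (Equiv.Perm (Fin (p ^ n)))) :
    (∃ A : Subgroup ↥(P : Subgroup (Equiv.Perm (Fin (p ^ n)))),
      (∀ a ∈ A, ∀ b ∈ A, a * b = b * a) ∧ Nat.card A = p ^ p ^ (n - 1)) ∧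
    (∀ A : Subgroup ↥(P : Subgroup (Equiv.Perm (Fin (p ^ n)))),
      (∀ a ∈ A, ∀ b ∈ A, a * b = b * a) → Nat.card A ≤ p ^ p ^ (n - 1)) ∧
    (∃ A : Subgroup ↥(P : Subgroup (Equiv.Perm (Fin (p ^ n)))),
      (∀ a ∈ A, ∀ b ∈ A, a * b = b * a) ∧ (∀ a ∈ A, a ^ p = 1) ∧
      Nat.card A = p ^ p ^ (n - 1)) ∧
    (∀ A : Subgroup ↥(P : Subgroup (Equiv.Perm (Fin (p ^ n)))),
      (∀ a ∈ A, ∀ b ∈ A, a * b = b * a) → (∀ a ∈ A, a ^ p = 1) →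
      Nat.card A ≤ p ^ p ^ (n - 1)) := by
  set Ps : Subgroup (Perm (Fin (p ^ n))) := (P : Subgroup (Equiv.Perm (Fin (p ^ n)))) with hPs
  -- existence
  obtain ⟨E, hEP, hEcomm, hEpow, hEcard⟩ := exists_elem_abelian' p n hp hn P
  have hex : ∃ A : Subgroup ↥Ps,
      (∀ a ∈ A, ∀ b ∈ A, a * b = b * a) ∧ (∀ a ∈ A, a ^ p = 1) ∧
      Nat.card A = p ^ p ^ (n - 1) := by
    refine ⟨E.subgroupOf Ps, ?_, ?_, ?_⟩
    · intro a ha b hb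
      exact Subtype.ext (hEcomm _ (Subgroup.mem_subgroupOf.mp ha) _ (Subgroup.mem_subgroupOf.mp hb))
    · intro a ha
      have := hEpow _ (Subgroup.mem_subgroupOf.mp ha)
      exact Subtype.ext (by push_cast; exact this)
    · rw [Nat.card_congr (Subgroup.subgroupOfEquivOfLe hEP).toEquiv, hEcard]
  -- upper bound
  have hub : ∀ A : Subgroup ↥Ps,
      (∀ a ∈ A, ∀ b ∈ A, a * b = b * a) → Nat.card A ≤ p ^ p ^ (n - 1) := by
    intro A hA
    set B : Subgroup (Perm (Fin (p ^ n))) := A.map Ps.subtype with hB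
    have hBcomm : ∀ a ∈ B, ∀ b ∈ B, a * b = b * a := comm_map' _ hA
    have hBP : B ≤ Ps := Subgroup.map_subtype_le A
    have hpB : IsPGroup p ↥B := (P.isPGroup').to_le hBP
    obtain ⟨m, hmcard, hmle⟩ := abelian_perm_pgroup_card' hp B hBcomm hpB
    have hcardA : Nat.card A = p ^ m := by
      rw [← hmcard, hB, card_map' _ Ps.subtype_injective]
    rw [Fintype.card_fin] at hmle
    have hmle' : m ≤ p ^ (n - 1) := by
      have : p * m ≤ p * p ^ (n - 1) := by
        rwa [← pow_succ', Nat.sub_add_cancel hn]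
      exact Nat.le_of_mul_le_mul_left this hp.pos
    rw [hcardA]
    exact Nat.pow_le_pow_right hp.pos hmle'
  obtain ⟨A, hA1, hA2, hA3⟩ := hex
  exact ⟨⟨A, hA1, hA3⟩, hub, ⟨A, hA1, hA2, hA3⟩, fun A h1 _ => hub A h1⟩
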